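/- Let n = 2m+1 be odd and let V be the number of bulbs on at the terminal time under the equal mixture (weight 1/4 each, over (a,b) ∈ {0,1}²) of lightbulb processes on n bulbs with switch pattern 𝐧(a,b) = (1,…,m−1, m+a, m+b, m+2,…,n) and all bulbs initially off. Then there exist, on a common probability space, random variables V' and V^s such that V' has the same distribution as V, V^s has the V'-size bias distribution, and V^s − V' ∈ {0, 1, 2} almost surely; in particular V' ≤ V^s ≤ V' + 2 almost surely. -/

import Mathlib

open MeasureTheory ProbabilityTheory Finset
open scoped ENNReal Classical

/-- The arrays of switch variables having exactly `s r` switches in stage `r`. -/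
def validArrays (n k : ℕ) (s : Fin k → ℕ) : Finset (Fin k → Fin n → Bool) :=
  Finset.univ.filter (fun e => ∀ r, (Finset.univ.filter (fun j => e r j = true)).card = s r)

/-- Terminal state of bulb `j` (all bulbs initially off). -/
def bulbOn {n k : ℕ} (e : Fin k → Fin n → Bool) (j : Fin n) : Bool :=
  decide ((Finset.univ.filter (fun r => e r j = true)).card % 2 = 1)

/-- Number of bulbs on at the terminal time. -/
def numOn {n k : ℕ} (e : Fin k → Fin n → Bool) : ℕ :=
  (Finset.univ.filter (fun j => bulbOn e j = true)).card

/-- The switch pattern `𝐧(a,b) = (1,…,m−1, m+a, m+b, m+2,…,n)` for `n = 2m+1` odd. -/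
def oddPattern (n m a b : ℕ) : Fin n → ℕ := fun r =>
  if (r : ℕ) + 1 = m then m + a
  else if (r : ℕ) + 1 = m + 1 then m + b
  else (r : ℕ) + 1

/-- `Ys` has the `Y`-size bias distribution:
`E[Y g(Y)] = (E Y) · E[g(Ys)]` for every bounded measurable `g`. -/
def HasSizeBias {Ω : Type*} [MeasurableSpace Ω] (P : Measure Ω) (Y Ys : Ω → ℝ) : Prop :=
  ∀ g : ℝ → ℝ, Measurable g → (∃ C, ∀ x, |g x| ≤ C) →
    ∫ ω, Y ω * g (Y ω) ∂P = (∫ ω, Y ω ∂P) * ∫ ω, g (Ys ω) ∂P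

lemma bool_eq_not {a b : Bool} (h : a ≠ b) : a = !b := by cases a <;> cases b <;> simp_all

section helpers
variable {α : Type*} [Fintype α] [DecidableEq α]

lemma card_split (p q : α → Prop) [DecidablePred p] [DecidablePred q] :
    (univ.filter p).card
      = (univ.filter fun x => p x ∧ q x).card + (univ.filter fun x => p x ∧ ¬ q x).card := by
  rw [← Finset.card_union_of_disjoint]
  · congr 1
    ext x
    simp only [mem_union, mem_filter, mem_univ, true_and]
    tauto
  · rw [Finset.disjoint_left]
    intro x hx hx'
    simp only [mem_filter] at hx hx'
    tauto

end helpers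

namespace LB

def rowCard {k : ℕ} (R : Fin k → Bool) : ℕ := (Finset.univ.filter fun j => R j = true).card

lemma rowCard_le {k : ℕ} (R : Fin k → Bool) : rowCard R ≤ k := by
  have := Finset.card_filter_le (Finset.univ : Finset (Fin k)) (fun j => R j = true)
  simpa [rowCard] using this

lemma rowCard_flip {k : ℕ} (R A : Fin k → Bool) (D : Finset (Fin k))
    (hD : ∀ x, A x ≠ R x ↔ x ∈ D) :
    rowCard A + (D.filter fun x => R x = true).card
      = rowCard R + (D.filter fun x => R x = false).card := by
  classical
  have hA := card_split (α := Fin k) (fun x => A x = true) (fun x => R x = true)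
  have hR := card_split (α := Fin k) (fun x => R x = true) (fun x => A x = true)
  have e1 : (univ.filter fun x => A x = true ∧ R x = true).card
      = (univ.filter fun x => R x = true ∧ A x = true).card := by
    congr 1; ext x; simp [and_comm]
  have e2 : (univ.filter fun x => R x = true ∧ ¬ A x = true) = D.filter fun x => R x = true := by
    ext x
    simp only [mem_filter, mem_univ, true_and, Bool.not_eq_true]
    constructor
    · rintro ⟨h1, h2⟩
      exact ⟨(hD x).1 (by simp [h1, h2]), h1⟩
    · rintro ⟨h1, h2⟩
      have := (hD x).2 h1
      refine ⟨h2, ?_⟩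
      cases hAx : A x <;> simp_all
  have e3 : (univ.filter fun x => A x = true ∧ ¬ R x = true) = D.filter fun x => R x = false := by
    ext x
    simp only [mem_filter, mem_univ, true_and, Bool.not_eq_true]
    constructor
    · rintro ⟨h1, h2⟩
      exact ⟨(hD x).1 (by simp [h1, h2]), by simpa using h2⟩
    · rintro ⟨h1, h2⟩
      have := (hD x).2 h1
      cases hAx : A x <;> simp_all
  rw [e2] at hR
  rw [e3] at hA
  unfold rowCard
  omega


abbrev Row (m : ℕ) := Fin (2*m+1) → Bool
abbrev Arr (m : ℕ) := Fin (2*m+1) → Fin (2*m+1) → Bool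

def sizeOK (m : ℕ) (R : Row m) : Prop := rowCard R = m ∨ rowCard R = m + 1
instance (m : ℕ) (R : Row m) : Decidable (sizeOK m R) := by unfold sizeOK; infer_instance

def adjRow {m : ℕ} (R A : Row m) : Prop :=
  A 0 ≠ R 0 ∧ (Finset.univ.filter fun i => i ≠ (0 : Fin (2*m+1)) ∧ A i ≠ R i).card ≤ 1
instance (m : ℕ) (R A : Row m) : Decidable (adjRow R A) := by unfold adjRow; infer_instance

def inS (m : ℕ) (e : Arr m) : Prop :=
  ∀ r : Fin (2*m+1), if (r : ℕ) + 1 = m ∨ (r : ℕ) + 1 = m + 1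
    then sizeOK m (e r) else rowCard (e r) = (r : ℕ) + 1
instance (m : ℕ) (e : Arr m) : Decidable (inS m e) := by unfold inS; infer_instance

def rho1 (m : ℕ) : Fin (2*m+1) := ⟨m - 1, by omega⟩
def rho2 (m : ℕ) : Fin (2*m+1) := ⟨m, by omega⟩

def cnt {m : ℕ} (ρ : Fin (2*m+1)) (e e' : Arr m) : ℕ :=
  if (∀ r, r ≠ ρ → e' r = e r) ∧ sizeOK m (e' ρ) ∧ adjRow (e ρ) (e' ρ) then 1 else 0

def cW {m : ℕ} (e e' : Arr m) : ℕ :=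
  (if inS m e then 1 else 0) *
    (if bulbOn e 0 = true then 2*(m+1) * (if e' = e then 1 else 0)
     else cnt (rho1 m) e e' + cnt (rho2 m) e e')


lemma card_filter_true_add_false {k : ℕ} (R : Fin k → Bool) :
    rowCard R + (univ.filter fun x => R x = false).card = k := by
  classical
  have := Finset.card_filter_add_card_filter_not
    (s := (univ : Finset (Fin k))) (p := fun x => R x = true)
  simp only [Bool.not_eq_true, card_univ, Fintype.card_fin] at this
  simpa [rowCard] using this

lemma card_adj {m : ℕ} (R : Row m) (hR : sizeOK m R) :
    (univ.filter fun A : Row m => sizeOK m A ∧ adjRow R A).card = m + 1 := by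
  classical
  set Φ : Fin (2*m+1) → Row m := fun i x => if x = 0 ∨ x = i then !(R x) else R x with hΦdef
  have hΦ0 : ∀ i, Φ i 0 = !R 0 := by intro i; simp [hΦdef]
  have hΦself : ∀ i, Φ i i = !R i := by intro i; simp [hΦdef]
  have hΦother : ∀ i x, x ≠ 0 → x ≠ i → Φ i x = R x := by
    intro i x h1 h2; simp [hΦdef, h1, h2]
  have hdiff : ∀ i x, Φ i x ≠ R x ↔ x ∈ ({0, i} : Finset (Fin (2*m+1))) := by
    intro i x
    simp only [mem_insert, mem_singleton]
    constructor
    · intro h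
      by_contra hc
      push_neg at hc
      exact h (hΦother i x hc.1 hc.2)
    · rintro (rfl | rfl)
      · rw [hΦ0]; simp
      · rw [hΦself]; simp
  have hinj : Function.Injective Φ := by
    intro i i' h
    by_contra hne
    by_cases hi : i = 0
    · subst hi
      have hi' : i' ≠ (0 : Fin (2*m+1)) := fun hc => hne hc.symm
      have h1 := congrFun h i'
      rw [hΦself, hΦother 0 i' hi' hi'] at h1
      simp at h1
    · have h1 := congrFun h i
      rw [hΦself, hΦother i' i hi (fun hc => hne hc)] at h1
      simp at h1
  set G : Finset (Fin (2*m+1)) := univ.filter (fun i => sizeOK m (Φ i)) with hGdef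
  have himg : (univ.filter fun A : Row m => sizeOK m A ∧ adjRow R A) = G.image Φ := by
    ext A
    simp only [mem_filter, mem_univ, true_and, mem_image, hGdef]
    constructor
    · rintro ⟨hsz, hAne, hcard⟩
      by_cases hD : (univ.filter fun x => x ≠ (0 : Fin (2*m+1)) ∧ A x ≠ R x).Nonempty
      · obtain ⟨i, hiD⟩ := hD
        simp only [mem_filter, mem_univ, true_and] at hiD
        have hA : A = Φ i := by
          funext x
          by_cases hx0 : x = 0
          · subst hx0; rw [hΦ0]; exact bool_eq_not hAne
          · by_cases hxi : x = i
            · subst hxi; rw [hΦself]; exact bool_eq_not hiD.2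
            · rw [hΦother i x hx0 hxi]
              by_contra hc
              have hxD : x ∈ univ.filter fun x => x ≠ (0 : Fin (2*m+1)) ∧ A x ≠ R x := by
                simp [hx0, hc]
              have hiD' : i ∈ univ.filter fun x => x ≠ (0 : Fin (2*m+1)) ∧ A x ≠ R x := by
                simp [hiD.1, hiD.2]
              have := Finset.card_le_one.mp hcard _ hxD _ hiD'
              exact hxi this
        exact ⟨i, by rw [← hA]; exact hsz, hA.symm⟩
      · rw [Finset.not_nonempty_iff_eq_empty] at hD
        have hA : A = Φ 0 := by
          funext x
          by_cases hx0 : x = 0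
          · subst hx0; rw [hΦ0]; exact bool_eq_not hAne
          · rw [hΦother 0 x hx0 hx0]
            by_contra hc
            have hxD : x ∈ univ.filter fun x => x ≠ (0 : Fin (2*m+1)) ∧ A x ≠ R x := by
              simp [hx0, hc]
            rw [hD] at hxD
            simp at hxD
        exact ⟨0, by rw [← hA]; exact hsz, hA.symm⟩
    · rintro ⟨i, hiG, rfl⟩
      refine ⟨hiG, ?_, ?_⟩
      · rw [hΦ0]; simp
      · have hsub : (univ.filter fun x => x ≠ (0 : Fin (2*m+1)) ∧ Φ i x ≠ R x) ⊆ {i} := by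
          intro x hx
          simp only [mem_filter, mem_univ, true_and] at hx
          have hx2 := (hdiff i x).mp hx.2
          simp only [mem_insert, mem_singleton] at hx2
          rcases hx2 with h | h
          · exact absurd h hx.1
          · simpa using h
        calc (univ.filter fun x => x ≠ (0 : Fin (2*m+1)) ∧ Φ i x ≠ R x).card
            ≤ ({i} : Finset _).card := Finset.card_le_card hsub
          _ = 1 := card_singleton i
  rw [himg, Finset.card_image_of_injective _ hinj]
  have htf := card_filter_true_add_false R
  -- pointwise membership computation
  have hmem : ∀ i : Fin (2*m+1), (i ∈ G ↔ sizeOK m (Φ i)) := by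
    intro i; simp [hGdef]
  have hkey : ∀ i : Fin (2*m+1), i ≠ 0 →
      rowCard (Φ i) + ((if R 0 = true then 1 else 0) + (if R i = true then 1 else 0))
        = rowCard R + ((if R 0 = false then 1 else 0) + (if R i = false then 1 else 0)) := by
    intro i hi
    have hk := rowCard_flip R (Φ i) _ (hdiff i)
    rw [Finset.card_filter, Finset.card_filter, Finset.sum_pair (Ne.symm hi),
        Finset.sum_pair (Ne.symm hi)] at hk
    exact hk
  have hkey0 : rowCard (Φ 0) + (if R 0 = true then 1 else 0)
      = rowCard R + (if R 0 = false then 1 else 0) := by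
    have hk := rowCard_flip R (Φ 0) _ (hdiff 0)
    have hpair : ({(0 : Fin (2*m+1)), (0 : Fin (2*m+1))} : Finset _) = {0} := by simp
    rw [hpair, Finset.card_filter, Finset.card_filter, Finset.sum_singleton,
        Finset.sum_singleton] at hk
    exact hk
  rcases Bool.eq_false_or_eq_true (R 0) with hR0 | hR0 <;> rcases hR with hs | hs
  · -- R 0 = true, rowCard R = m : G = filter false
    have hG : G = univ.filter fun i => R i = false := by
      ext i
      rw [hmem i]
      simp only [mem_filter, mem_univ, true_and]
      by_cases hi : i = 0
      · have hk0 := hkey0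
        rw [hR0] at hk0
        norm_num at hk0
        subst hi
        rw [hR0]
        constructor
        · intro h; exfalso; unfold sizeOK at h; omega
        · intro h; exact absurd h (by simp)
      · have hk := hkey i hi
        rw [hR0] at hk
        norm_num at hk
        rcases Bool.eq_false_or_eq_true (R i) with hRi | hRi
        · rw [hRi] at hk ⊢
          norm_num at hk
          constructor
          · intro h; exfalso; unfold sizeOK at h; omega
          · intro h; exact absurd h (by simp)
        · rw [hRi] at hk ⊢
          norm_num at hk
          refine ⟨fun _ => rfl, fun _ => ?_⟩
          unfold sizeOK
          omega
    rw [hG]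
    omega
  · -- R 0 = true, rowCard R = m+1 : G = insert 0 (filter false)
    have hG : G = insert 0 (univ.filter fun i => R i = false) := by
      ext i
      rw [hmem i]
      simp only [mem_insert, mem_filter, mem_univ, true_and]
      by_cases hi : i = 0
      · have hk0 := hkey0
        rw [hR0] at hk0
        norm_num at hk0
        subst hi
        refine ⟨fun _ => Or.inl rfl, fun _ => ?_⟩
        unfold sizeOK
        omega
      · have hk := hkey i hi
        rw [hR0] at hk
        norm_num at hk
        rcases Bool.eq_false_or_eq_true (R i) with hRi | hRi
        · rw [hRi] at hk ⊢
          norm_num at hk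
          constructor
          · intro h; exfalso; unfold sizeOK at h; omega
          · rintro (h | h)
            · exact absurd h hi
            · exact absurd h (by simp)
        · rw [hRi] at hk ⊢
          norm_num at hk
          refine ⟨fun _ => Or.inr rfl, fun _ => ?_⟩
          unfold sizeOK
          omega
    rw [hG, Finset.card_insert_of_notMem (by simp [hR0])]
    omega
  · -- R 0 = false, rowCard R = m : G = insert 0 (filter true)
    have hG : G = insert 0 (univ.filter fun i => R i = true) := by
      ext i
      rw [hmem i]
      simp only [mem_insert, mem_filter, mem_univ, true_and]
      by_cases hi : i = 0
      · have hk0 := hkey0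
        rw [hR0] at hk0
        norm_num at hk0
        subst hi
        refine ⟨fun _ => Or.inl rfl, fun _ => ?_⟩
        unfold sizeOK
        omega
      · have hk := hkey i hi
        rw [hR0] at hk
        norm_num at hk
        rcases Bool.eq_false_or_eq_true (R i) with hRi | hRi
        · rw [hRi] at hk ⊢
          norm_num at hk
          refine ⟨fun _ => Or.inr rfl, fun _ => ?_⟩
          unfold sizeOK
          omega
        · rw [hRi] at hk ⊢
          norm_num at hk
          constructor
          · intro h; exfalso; unfold sizeOK at h; omega
          · rintro (h | h)
            · exact absurd h hi
            · exact absurd h (by simp)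
    rw [hG, Finset.card_insert_of_notMem (by simp [hR0])]
    have hcc : (univ.filter fun i => R i = true).card = m := hs
    omega
  · -- R 0 = false, rowCard R = m+1 : G = filter true
    have hG : G = univ.filter fun i => R i = true := by
      ext i
      rw [hmem i]
      simp only [mem_filter, mem_univ, true_and]
      by_cases hi : i = 0
      · have hk0 := hkey0
        rw [hR0] at hk0
        norm_num at hk0
        subst hi
        rw [hR0]
        constructor
        · intro h; exfalso; unfold sizeOK at h; omega
        · intro h; exact absurd h (by simp)
      · have hk := hkey i hi
        rw [hR0] at hk
        norm_num at hk
        rcases Bool.eq_false_or_eq_true (R i) with hRi | hRi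
        · rw [hRi] at hk ⊢
          norm_num at hk
          refine ⟨fun _ => rfl, fun _ => ?_⟩
          unfold sizeOK
          omega
        · rw [hRi] at hk ⊢
          norm_num at hk
          constructor
          · intro h; exfalso; unfold sizeOK at h; omega
          · intro h; exact absurd h (by simp)
    rw [hG]
    exact hs

lemma special_iff (m : ℕ) (r : Fin (2*m+1)) :
    ((r:ℕ)+1 = m ∨ (r:ℕ)+1 = m+1) ↔ (r = rho1 m ∨ r = rho2 m) := by
  constructor
  · rintro (h | h)
    · left; apply Fin.ext; simp only [rho1]; omega
    · right; apply Fin.ext; simp only [rho2]; omega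
  · rintro (rfl | rfl)
    · simp only [rho1]; omega
    · right; simp [rho2]

lemma inS_iff {m : ℕ} (e : Arr m) : inS m e ↔
    ((∀ r, r ≠ rho1 m → r ≠ rho2 m → rowCard (e r) = (r:ℕ)+1)
      ∧ sizeOK m (e (rho1 m)) ∧ sizeOK m (e (rho2 m))) := by
  unfold inS
  constructor
  · intro h
    refine ⟨fun r h1 h2 => ?_, ?_, ?_⟩
    · have hr := h r
      rw [if_neg] at hr
      · exact hr
      · rw [special_iff]; tauto
    · have hr := h (rho1 m)
      rw [if_pos ((special_iff m _).mpr (Or.inl rfl))] at hr; exact hr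
    · have hr := h (rho2 m)
      rw [if_pos ((special_iff m _).mpr (Or.inr rfl))] at hr; exact hr
  · rintro ⟨hbase, h1, h2⟩ r
    by_cases hsp : (r:ℕ)+1 = m ∨ (r:ℕ)+1 = m+1
    · rw [if_pos hsp]
      rcases (special_iff m r).mp hsp with rfl | rfl <;> assumption
    · rw [if_neg hsp]
      refine hbase r (fun hc => hsp ?_) (fun hc => hsp ?_)
      · subst hc; exact (special_iff m _).mpr (Or.inl rfl)
      · subst hc; exact (special_iff m _).mpr (Or.inr rfl)

lemma inS_special {m : ℕ} {e : Arr m} (he : inS m e) {ρ : Fin (2*m+1)}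
    (hρ : ρ = rho1 m ∨ ρ = rho2 m) : sizeOK m (e ρ) := by
  rw [inS_iff] at he
  rcases hρ with rfl | rfl
  · exact he.2.1
  · exact he.2.2

lemma inS_transfer {m : ℕ} {e e' : Arr m} {ρ : Fin (2*m+1)} (hρ : ρ = rho1 m ∨ ρ = rho2 m)
    (he : inS m e) (hag : ∀ r, r ≠ ρ → e' r = e r) (hsz : sizeOK m (e' ρ)) : inS m e' := by
  rw [inS_iff] at he ⊢
  obtain ⟨hbase, h1, h2⟩ := he
  refine ⟨fun r hr1 hr2 => ?_, ?_, ?_⟩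
  · rw [hag r (by rcases hρ with rfl | rfl; exact hr1; exact hr2)]
    exact hbase r hr1 hr2
  · by_cases hr : rho1 m = ρ
    · rw [hr]; exact hsz
    · rw [hag _ hr]; exact h1
  · by_cases hr : rho2 m = ρ
    · rw [hr]; exact hsz
    · rw [hag _ hr]; exact h2

lemma bulb0_flip {m : ℕ} {e e' : Arr m} {ρ : Fin (2*m+1)}
    (hag : ∀ r, r ≠ ρ → e' r = e r) (hne : e' ρ 0 ≠ e ρ 0) :
    bulbOn e' 0 = !(bulbOn e 0) := by
  classical
  have hsum : ∀ f : Fin (2*m+1) → Fin (2*m+1) → Bool,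
      (univ.filter fun r => f r (0 : Fin (2*m+1)) = true).card
        = (∑ r ∈ univ.erase ρ, if f r 0 = true then 1 else 0) + (if f ρ 0 = true then 1 else 0) := by
    intro f
    rw [Finset.card_filter, ← Finset.sum_erase_add _ _ (mem_univ ρ)]
  have hcongr : (∑ r ∈ univ.erase ρ, if e' r 0 = true then 1 else 0)
      = ∑ r ∈ univ.erase ρ, if e r 0 = true then 1 else 0 := by
    refine Finset.sum_congr rfl (fun r hr => ?_)
    rw [hag r (Finset.ne_of_mem_erase hr)]
  have h1 := hsum e'
  have h2 := hsum e
  have hbe' : e' ρ 0 = !(e ρ 0) := by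
    rcases Bool.eq_false_or_eq_true (e' ρ 0) with h | h <;>
      rcases Bool.eq_false_or_eq_true (e ρ 0) with h' | h' <;>
        simp_all
  unfold bulbOn
  rw [← decide_not, decide_eq_decide]
  rcases Bool.eq_false_or_eq_true (e ρ 0) with h | h
  · rw [h, Bool.not_true] at hbe'
    rw [hbe', if_neg (by simp)] at h1
    rw [h, if_pos rfl] at h2
    omega
  · rw [h, Bool.not_false] at hbe'
    rw [hbe', if_pos rfl] at h1
    rw [h, if_neg (by simp)] at h2
    omega

lemma sum_agree {m : ℕ} {M : Type*} [AddCommMonoid M] (e₀ : Arr m) (ρ : Fin (2*m+1))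
    (F : Arr m → M) (hF : ∀ e, ¬ (∀ r, r ≠ ρ → e r = e₀ r) → F e = 0) :
    ∑ e : Arr m, F e = ∑ R : Row m, F (Function.update e₀ ρ R) := by
  classical
  have h1 : ∑ e : Arr m, F e = ∑ e ∈ univ.filter (fun e : Arr m => ∀ r, r ≠ ρ → e r = e₀ r), F e := by
    refine (Finset.sum_filter_of_ne (fun e _ hne => ?_)).symm
    by_contra hc
    exact hne (hF e hc)
  rw [h1]
  refine Finset.sum_nbij' (i := fun e => e ρ) (j := fun R => Function.update e₀ ρ R)
    ?_ ?_ ?_ ?_ ?_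
  · intro e he; exact mem_univ _
  · intro R hR
    simp only [mem_filter, mem_univ, true_and]
    intro r hr
    exact Function.update_of_ne hr _ _
  · intro e he
    simp only [mem_filter, mem_univ, true_and] at he
    try dsimp only
    funext r
    by_cases hr : r = ρ
    · subst hr; rw [Function.update_self]
    · rw [Function.update_of_ne hr, he r hr]
  · intro R hR
    try dsimp only
    rw [Function.update_self]
  · intro e he
    simp only [mem_filter, mem_univ, true_and] at he
    try dsimp only
    congr 1
    funext r
    by_cases hr : r = ρ
    · subst hr; rw [Function.update_self]
    · rw [Function.update_of_ne hr, he r hr]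

lemma sum_cnt {m : ℕ} (e : Arr m) (ρ : Fin (2*m+1)) (hsz : sizeOK m (e ρ)) :
    ∑ e' : Arr m, cnt ρ e e' = m + 1 := by
  classical
  rw [sum_agree e ρ _ (fun e' hne => by unfold cnt; rw [if_neg]; tauto)]
  have hterm : ∀ R : Row m, cnt ρ e (Function.update e ρ R)
      = if sizeOK m R ∧ adjRow (e ρ) R then 1 else 0 := by
    intro R
    unfold cnt
    have hcond : ((∀ r, r ≠ ρ → Function.update e ρ R r = e r)
        ∧ sizeOK m (Function.update e ρ R ρ) ∧ adjRow (e ρ) (Function.update e ρ R ρ))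
        ↔ (sizeOK m R ∧ adjRow (e ρ) R) := by
      rw [Function.update_self]
      constructor
      · rintro ⟨_, h2, h3⟩; exact ⟨h2, h3⟩
      · rintro ⟨h2, h3⟩
        exact ⟨fun r hr => Function.update_of_ne hr _ _, h2, h3⟩
    rw [if_congr hcond rfl rfl]
  rw [Finset.sum_congr rfl (fun R _ => hterm R), ← Finset.card_filter]
  exact card_adj (e ρ) hsz

lemma adjRow_symm {m : ℕ} {R A : Row m} (h : adjRow R A) : adjRow A R := by
  obtain ⟨h1, h2⟩ := h
  refine ⟨Ne.symm h1, le_trans (le_of_eq ?_) h2⟩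
  congr 1
  ext i
  simp only [mem_filter, mem_univ, true_and]
  exact and_congr_right (fun _ => ne_comm)

lemma sum_cnt_col {m : ℕ} (e' : Arr m) (ρ : Fin (2*m+1)) (hρ : ρ = rho1 m ∨ ρ = rho2 m) :
    ∑ e : Arr m, (if inS m e ∧ bulbOn e 0 = false then 1 else 0) * cnt ρ e e'
      = if inS m e' ∧ bulbOn e' 0 = true then m + 1 else 0 := by
  classical
  by_cases h : inS m e' ∧ bulbOn e' 0 = true
  · rw [if_pos h]
    have hsz' : sizeOK m (e' ρ) := inS_special h.1 hρ
    rw [sum_agree e' ρ _ (fun e hne => by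
      have hz : cnt ρ e e' = 0 := by
        unfold cnt
        rw [if_neg]
        intro hc
        exact hne (fun r hr => (hc.1 r hr).symm)
      rw [hz, mul_zero])]
    have hterm : ∀ R : Row m,
        (if inS m (Function.update e' ρ R) ∧ bulbOn (Function.update e' ρ R) 0 = false
          then 1 else 0) * cnt ρ (Function.update e' ρ R) e'
        = if sizeOK m R ∧ adjRow R (e' ρ) then 1 else 0 := by
      intro R
      by_cases hc : sizeOK m R ∧ adjRow R (e' ρ)
      · rw [if_pos hc]
        have hag : ∀ r, r ≠ ρ → Function.update e' ρ R r = e' r :=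
          fun r hr => Function.update_of_ne hr _ _
        have hinS : inS m (Function.update e' ρ R) :=
          inS_transfer hρ h.1 hag (by rw [Function.update_self]; exact hc.1)
        have hflip : bulbOn e' 0 = !(bulbOn (Function.update e' ρ R) 0) := by
          refine bulb0_flip (fun r hr => (hag r hr).symm) ?_
          rw [Function.update_self]
          exact hc.2.1
        have hb : bulbOn (Function.update e' ρ R) 0 = false := by
          rcases Bool.eq_false_or_eq_true (bulbOn (Function.update e' ρ R) 0) with hb | hb
          · rw [hb] at hflip; rw [h.2] at hflip; simp at hflip
          · exact hb
        rw [if_pos ⟨hinS, hb⟩, one_mul]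
        unfold cnt
        rw [if_pos]
        refine ⟨fun r hr => (hag r hr).symm, hsz', ?_⟩
        rw [Function.update_self]
        exact hc.2
      · rw [if_neg hc]
        by_cases hcnt : cnt ρ (Function.update e' ρ R) e' = 0
        · rw [hcnt, mul_zero]
        · have hcnt1 : (∀ r, r ≠ ρ → e' r = Function.update e' ρ R r)
              ∧ sizeOK m (e' ρ) ∧ adjRow (Function.update e' ρ R ρ) (e' ρ) := by
            by_contra hcc
            exact hcnt (by unfold cnt; rw [if_neg hcc])
          rw [Function.update_self] at hcnt1
          have hszR : ¬ sizeOK m R := by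
            intro hszR
            exact hc ⟨hszR, hcnt1.2.2⟩
          have : ¬ inS m (Function.update e' ρ R) := by
            intro hin
            exact hszR (by
              have := inS_special hin hρ
              rwa [Function.update_self] at this)
          rw [if_neg (fun hcc => this hcc.1), zero_mul]
    rw [Finset.sum_congr rfl (fun R _ => hterm R), ← Finset.card_filter]
    have hsymm : (univ.filter fun R : Row m => sizeOK m R ∧ adjRow R (e' ρ))
        = univ.filter fun R : Row m => sizeOK m R ∧ adjRow (e' ρ) R := by
      ext R
      simp only [mem_filter, mem_univ, true_and]
      exact and_congr_right (fun _ => ⟨adjRow_symm, adjRow_symm⟩)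
    rw [hsymm]
    exact card_adj (e' ρ) hsz'
  · rw [if_neg h]
    refine Finset.sum_eq_zero (fun e _ => ?_)
    by_cases hb : inS m e ∧ bulbOn e 0 = false
    · rw [if_pos hb, one_mul]
      unfold cnt
      rw [if_neg]
      rintro ⟨hag, hsz, hadj⟩
      refine h ⟨inS_transfer hρ hb.1 hag hsz, ?_⟩
      rw [bulb0_flip hag hadj.1, hb.2]
      rfl
    · rw [if_neg hb, zero_mul]

lemma cW_eq {m : ℕ} (e e' : Arr m) :
    cW e e' = (if inS m e ∧ bulbOn e 0 = true then 1 else 0) * (2*(m+1)) * (if e' = e then 1 else 0)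
      + (if inS m e ∧ bulbOn e 0 = false then 1 else 0) * (cnt (rho1 m) e e' + cnt (rho2 m) e e') := by
  unfold cW
  by_cases h1 : inS m e
  · rcases Bool.eq_false_or_eq_true (bulbOn e 0) with hb | hb
    · rw [if_pos h1, if_pos hb,
        if_pos (show inS m e ∧ bulbOn e 0 = true from ⟨h1, hb⟩),
        if_neg (show ¬(inS m e ∧ bulbOn e 0 = false) from fun hc => by
          rw [hb] at hc; exact absurd hc.2 (by simp))]
      ring
    · rw [if_pos h1,
        if_neg (show ¬ bulbOn e 0 = true from by rw [hb]; simp),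
        if_neg (show ¬(inS m e ∧ bulbOn e 0 = true) from fun hc => by
          rw [hb] at hc; exact absurd hc.2 (by simp)),
        if_pos (show inS m e ∧ bulbOn e 0 = false from ⟨h1, hb⟩)]
      ring
  · rw [if_neg h1,
      if_neg (show ¬(inS m e ∧ bulbOn e 0 = true) from fun hc => h1 hc.1),
      if_neg (show ¬(inS m e ∧ bulbOn e 0 = false) from fun hc => h1 hc.1)]
    ring

lemma cW_rowsum {m : ℕ} (e : Arr m) :
    ∑ e' : Arr m, cW e e' = (if inS m e then 1 else 0) * (2*(m+1)) := by
  classical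
  by_cases h1 : inS m e
  · rcases Bool.eq_false_or_eq_true (bulbOn e 0) with hb | hb
    · -- bulbOn true : diagonal branch
      have hter : ∀ e' : Arr m, cW e e' = if e' = e then 2*(m+1) else 0 := by
        intro e'
        unfold cW
        rw [if_pos h1, if_pos hb, one_mul]
        by_cases h : e' = e
        · rw [if_pos h, if_pos h, mul_one]
        · rw [if_neg h, if_neg h, mul_zero]
      rw [Finset.sum_congr rfl (fun e' _ => hter e'),
        Finset.sum_ite_eq' univ e (fun _ => 2*(m+1)), if_pos (mem_univ e), if_pos h1, one_mul]
    · -- bulbOn false : kernel branch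
      have hter : ∀ e' : Arr m, cW e e' = cnt (rho1 m) e e' + cnt (rho2 m) e e' := by
        intro e'
        unfold cW
        rw [if_pos h1, if_neg (by rw [hb]; simp), one_mul]
      rw [Finset.sum_congr rfl (fun e' _ => hter e'), Finset.sum_add_distrib,
        sum_cnt e _ (inS_special h1 (Or.inl rfl)), sum_cnt e _ (inS_special h1 (Or.inr rfl)),
        if_pos h1, one_mul]
      ring
  · have hter : ∀ e' : Arr m, cW e e' = 0 := by
      intro e'
      unfold cW
      rw [if_neg h1, zero_mul]
    rw [Finset.sum_congr rfl (fun e' _ => hter e'), Finset.sum_const, if_neg h1, zero_mul]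
    simp

lemma cW_colsum {m : ℕ} (e' : Arr m) :
    ∑ e : Arr m, cW e e' = (if inS m e' ∧ bulbOn e' 0 = true then 1 else 0) * (4*(m+1)) := by
  classical
  rw [Finset.sum_congr rfl (fun e _ => cW_eq e e'), Finset.sum_add_distrib]
  have h1 : ∑ e : Arr m, (if inS m e ∧ bulbOn e 0 = true then 1 else 0) * (2*(m+1))
      * (if e' = e then 1 else 0)
      = (if inS m e' ∧ bulbOn e' 0 = true then 1 else 0) * (2*(m+1)) := by
    have hter : ∀ e : Arr m, (if inS m e ∧ bulbOn e 0 = true then 1 else 0) * (2*(m+1))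
        * (if e' = e then 1 else 0)
        = if e = e' then (if inS m e ∧ bulbOn e 0 = true then 1 else 0) * (2*(m+1)) else 0 := by
      intro e
      by_cases h : e' = e
      · rw [if_pos h, if_pos h.symm, mul_one]
      · rw [if_neg h, if_neg (fun hc : e = e' => h hc.symm), mul_zero]
    rw [Finset.sum_congr rfl (fun e _ => hter e), Finset.sum_ite_eq' univ e'
      (fun e => (if inS m e ∧ bulbOn e 0 = true then 1 else 0) * (2*(m+1))), if_pos (mem_univ e')]
  have h2 : ∑ e : Arr m, (if inS m e ∧ bulbOn e 0 = false then 1 else 0)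
      * (cnt (rho1 m) e e' + cnt (rho2 m) e e')
      = (if inS m e' ∧ bulbOn e' 0 = true then 1 else 0) * (2*(m+1)) := by
    have hter : ∀ e : Arr m, (if inS m e ∧ bulbOn e 0 = false then 1 else 0)
        * (cnt (rho1 m) e e' + cnt (rho2 m) e e')
        = (if inS m e ∧ bulbOn e 0 = false then 1 else 0) * cnt (rho1 m) e e'
          + (if inS m e ∧ bulbOn e 0 = false then 1 else 0) * cnt (rho2 m) e e' := by
      intro e; ring
    rw [Finset.sum_congr rfl (fun e _ => hter e), Finset.sum_add_distrib,
      sum_cnt_col e' _ (Or.inl rfl), sum_cnt_col e' _ (Or.inr rfl)]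
    by_cases h : inS m e' ∧ bulbOn e' 0 = true
    · simp only [if_pos h]
      ring
    · simp only [if_neg h]
      ring
  rw [h1, h2]
  by_cases h : inS m e' ∧ bulbOn e' 0 = true
  · simp only [if_pos h]
    ring
  · simp only [if_neg h]
    ring


/-! ### support of the coupling -/

lemma cnt_support {m : ℕ} {e e' : Arr m} {ρ : Fin (2*m+1)}
    (h : cnt ρ e e' ≠ 0) (hb : bulbOn e 0 = false) :
    numOn e' = numOn e ∨ numOn e' = numOn e + 1 ∨ numOn e' = numOn e + 2 := by
  classical
  have hc : (∀ r, r ≠ ρ → e' r = e r) ∧ sizeOK m (e' ρ) ∧ adjRow (e ρ) (e' ρ) := by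
    by_contra hcc
    exact h (by unfold cnt; rw [if_neg hcc])
  have hag := hc.1
  have hne0 := hc.2.2.1
  have hD := hc.2.2.2
  set D := univ.filter (fun i => i ≠ (0 : Fin (2*m+1)) ∧ e' ρ i ≠ e ρ i) with hDdef
  by_cases hDne : D.Nonempty
  case neg =>
    -- no second bulb changed
    have hkey : ∀ i, i ≠ (0 : Fin (2*m+1)) → e' ρ i = e ρ i := by
      intro i hi
      by_contra hcc
      exact hDne ⟨i, by simp [hDdef, hi, hcc]⟩
    have hcol : ∀ i, i ≠ (0 : Fin (2*m+1)) → bulbOn e' i = bulbOn e i := by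
      intro i hi
      have hfe : (univ.filter fun r => e' r i = true) = (univ.filter fun r => e r i = true) := by
        ext r
        simp only [mem_filter, mem_univ, true_and]
        by_cases hr : r = ρ
        · subst hr; rw [hkey i hi]
        · rw [hag r hr]
      unfold bulbOn
      rw [hfe]
    have hb' : bulbOn e' 0 = true := by rw [bulb0_flip hag hne0, hb]; rfl
    -- numOn e' = numOn e + 1
    right; left
    unfold numOn
    have hsplit : ∀ f : Arr m, (univ.filter fun i => bulbOn f i = true).card
        = (({0} : Finset (Fin (2*m+1))).filter fun i => bulbOn f i = true).card
          + ((({0} : Finset (Fin (2*m+1)))ᶜ).filter fun i => bulbOn f i = true).card := by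
      intro f
      rw [← Finset.card_union_of_disjoint (Finset.disjoint_filter_filter disjoint_compl_right),
        ← Finset.filter_union, Finset.union_compl]
    rw [hsplit e', hsplit e]
    have hcompl : ((({0} : Finset (Fin (2*m+1)))ᶜ).filter fun i => bulbOn e' i = true)
        = ((({0} : Finset (Fin (2*m+1)))ᶜ).filter fun i => bulbOn e i = true) := by
      refine Finset.filter_congr (fun i hi => ?_)
      rw [hcol i (by simpa using hi)]
    rw [hcompl]
    have h1 : (({0} : Finset (Fin (2*m+1))).filter fun i => bulbOn e' i = true) = {0} := by
      rw [Finset.filter_singleton, if_pos hb']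
    have h2 : (({0} : Finset (Fin (2*m+1))).filter fun i => bulbOn e i = true) = ∅ := by
      rw [Finset.filter_singleton, if_neg (by rw [hb]; simp)]
    rw [h1, h2]
    simp
    omega
  case pos =>
    obtain ⟨j, hjD⟩ := hDne
    have hj := (mem_filter.mp hjD).2
    have hkey : ∀ i, i ≠ (0 : Fin (2*m+1)) → i ≠ j → e' ρ i = e ρ i := by
      intro i hi hij
      by_contra hcc
      have hiD : i ∈ D := by simp [hDdef, hi, hcc]
      exact hij (Finset.card_le_one.mp hD i hiD j hjD)
    have hcol : ∀ i, i ≠ (0 : Fin (2*m+1)) → i ≠ j → bulbOn e' i = bulbOn e i := by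
      intro i hi hij
      have hfe : (univ.filter fun r => e' r i = true) = (univ.filter fun r => e r i = true) := by
        ext r
        simp only [mem_filter, mem_univ, true_and]
        by_cases hr : r = ρ
        · subst hr; rw [hkey i hi hij]
        · rw [hag r hr]
      unfold bulbOn
      rw [hfe]
    have hb' : bulbOn e' 0 = true := by rw [bulb0_flip hag hne0, hb]; rfl
    set s₂ : Finset (Fin (2*m+1)) := {0, j} with hs₂
    have hsplit : ∀ f : Arr m, numOn f
        = (s₂.filter fun i => bulbOn f i = true).card
          + ((s₂ᶜ).filter fun i => bulbOn f i = true).card := by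
      intro f
      unfold numOn
      rw [← Finset.card_union_of_disjoint (Finset.disjoint_filter_filter disjoint_compl_right),
        ← Finset.filter_union, Finset.union_compl]
    have hcompl : ((s₂ᶜ).filter fun i => bulbOn e' i = true)
        = ((s₂ᶜ).filter fun i => bulbOn e i = true) := by
      refine Finset.filter_congr (fun i hi => ?_)
      rw [Finset.mem_compl, hs₂, Finset.mem_insert, Finset.mem_singleton] at hi
      push_neg at hi
      rw [hcol i hi.1 hi.2]
    have ht : (s₂.filter fun i => bulbOn e i = true).card ≤ 1 := by
      refine le_trans (Finset.card_le_card (fun x hx => ?_)) (card_singleton j).le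
      rw [mem_filter, hs₂, Finset.mem_insert, Finset.mem_singleton] at hx
      rcases hx.1 with rfl | rfl
      · rw [hb] at hx; simp at hx
      · exact Finset.mem_singleton_self _
    have ht'l : 1 ≤ (s₂.filter fun i => bulbOn e' i = true).card := by
      refine le_trans (card_singleton (0 : Fin (2*m+1))).ge (Finset.card_le_card (fun x hx => ?_))
      rw [Finset.mem_singleton] at hx
      subst hx
      rw [mem_filter, hs₂]
      exact ⟨Finset.mem_insert_self _ _, hb'⟩
    have ht'u : (s₂.filter fun i => bulbOn e' i = true).card ≤ 2 := by
      refine le_trans (Finset.card_filter_le _ _) ?_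
      rw [hs₂]
      exact le_trans (Finset.card_insert_le _ _) (by simp)
    rw [hsplit e', hsplit e, hcompl]
    omega

lemma cW_support {m : ℕ} {e e' : Arr m} (h : cW e e' ≠ 0) :
    numOn e' = numOn e ∨ numOn e' = numOn e + 1 ∨ numOn e' = numOn e + 2 := by
  unfold cW at h
  rcases Bool.eq_false_or_eq_true (bulbOn e 0) with hbt | hbf
  · rw [if_pos hbt] at h
    have he' : e' = e := by
      by_contra hc
      rw [if_neg hc] at h
      simp at h
    rw [he']
    left; rfl
  · rw [if_neg (show ¬ (bulbOn e 0 = true) by rw [hbf]; simp)] at h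
    have : cnt (rho1 m) e e' ≠ 0 ∨ cnt (rho2 m) e e' ≠ 0 := by
      by_contra hc
      push_neg at hc
      rw [hc.1, hc.2] at h
      simp at h
    rcases this with hcc | hcc
    · exact cnt_support hcc hbf
    · exact cnt_support hcc hbf

/-! ### exchangeability -/

lemma sum_swap_bulb {m : ℕ} (j : Fin (2*m+1)) (F : ℕ → ℝ) :
    ∑ e ∈ univ.filter (fun e : Arr m => inS m e), (if bulbOn e j = true then F (numOn e) else 0)
      = ∑ e ∈ univ.filter (fun e : Arr m => inS m e),
          (if bulbOn e 0 = true then F (numOn e) else 0) := by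
  classical
  set σ := Equiv.swap (0 : Fin (2*m+1)) j with hσ
  set T : Arr m → Arr m := fun e => fun r i => e r (σ i) with hT
  have hTT : ∀ e, T (T e) = e := by
    intro e; funext r i
    show e r (σ (σ i)) = e r i
    rw [hσ, Equiv.swap_apply_self]
  have hrow : ∀ (e : Arr m) r, rowCard (T e r) = rowCard (e r) := by
    intro e r
    unfold rowCard
    rw [Finset.card_filter, Finset.card_filter]
    exact Equiv.sum_comp σ (fun i => if e r i = true then 1 else 0)
  have hinS : ∀ e, inS m (T e) ↔ inS m e := by
    intro e
    unfold inS sizeOK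
    refine forall_congr' (fun r => ?_)
    rw [hrow e r]
  have hbulb : ∀ (e : Arr m) i, bulbOn (T e) i = bulbOn e (σ i) := fun e i => rfl
  have hnum : ∀ e : Arr m, numOn (T e) = numOn e := by
    intro e
    unfold numOn
    rw [Finset.card_filter, Finset.card_filter]
    have h0 : (∑ i : Fin (2*m+1), if bulbOn (T e) i = true then (1:ℕ) else 0)
        = ∑ i : Fin (2*m+1), if bulbOn e (σ i) = true then 1 else 0 := rfl
    rw [h0]
    exact Equiv.sum_comp σ (fun i => if bulbOn e i = true then 1 else 0)
  refine Finset.sum_nbij' (i := T) (j := T) ?_ ?_ ?_ ?_ ?_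
  · intro e he
    simp only [mem_filter, mem_univ, true_and] at he ⊢
    exact (hinS e).mpr he
  · intro e he
    simp only [mem_filter, mem_univ, true_and] at he ⊢
    exact (hinS e).mpr he
  · intro e _; exact hTT e
  · intro e _; exact hTT e
  · intro e _
    rw [hbulb, hnum]
    rw [show σ (0 : Fin (2*m+1)) = j from Equiv.swap_apply_left 0 j]

lemma numOn_cast_sum {m : ℕ} (e : Arr m) :
    (numOn e : ℝ) = ∑ i : Fin (2*m+1), (if bulbOn e i = true then (1:ℝ) else 0) := by
  unfold numOn
  rw [Finset.card_filter]
  push_cast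
  refine Finset.sum_congr rfl (fun i _ => ?_)
  by_cases h : bulbOn e i = true <;> simp [h]

lemma sum_V_F {m : ℕ} (F : ℕ → ℝ) :
    ∑ e ∈ univ.filter (fun e : Arr m => inS m e), (numOn e : ℝ) * F (numOn e)
      = (2*m+1 : ℝ) * ∑ e ∈ univ.filter (fun e : Arr m => inS m e),
          (if bulbOn e 0 = true then F (numOn e) else 0) := by
  classical
  have h1 : ∀ e : Arr m, (numOn e : ℝ) * F (numOn e)
      = ∑ i : Fin (2*m+1), (if bulbOn e i = true then F (numOn e) else 0) := by
    intro e
    rw [numOn_cast_sum, Finset.sum_mul]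
    refine Finset.sum_congr rfl (fun i _ => ?_)
    by_cases h : bulbOn e i = true <;> simp [h]
  rw [Finset.sum_congr rfl (fun e _ => h1 e), Finset.sum_comm]
  rw [Finset.sum_congr rfl (fun i (_ : i ∈ univ) => sum_swap_bulb i F)]
  rw [Finset.sum_const, Finset.card_univ, Fintype.card_fin]
  rw [nsmul_eq_mul]
  push_cast
  ring

/-! ### explicit elements and counting of validArrays -/

lemma card_filter_lt {k s : ℕ} (hs : s ≤ k) :
    (univ.filter fun j : Fin k => (j:ℕ) < s).card = s := by
  classical
  have himg : (univ.filter fun j : Fin k => (j:ℕ) < s).image Fin.val = Finset.range s := by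
    ext x
    simp only [Finset.mem_image, mem_filter, mem_univ, true_and, Finset.mem_range]
    constructor
    · rintro ⟨j, hj, rfl⟩; exact hj
    · intro hx; exact ⟨⟨x, lt_of_lt_of_le hx hs⟩, hx, rfl⟩
  calc (univ.filter fun j : Fin k => (j:ℕ) < s).card
      = ((univ.filter fun j : Fin k => (j:ℕ) < s).image Fin.val).card :=
        (Finset.card_image_of_injective _ Fin.val_injective).symm
    _ = (Finset.range s).card := by rw [himg]
    _ = s := Finset.card_range s

lemma rowCard_lt {k s : ℕ} (hs : s ≤ k) :
    rowCard (fun j : Fin k => decide ((j:ℕ) < s)) = s := by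
  unfold rowCard
  have heq : (univ.filter fun j : Fin k => (decide ((j:ℕ) < s)) = true)
      = (univ.filter fun j : Fin k => (j:ℕ) < s) := by
    ext j; simp
  rw [heq]
  exact card_filter_lt hs

def VA (m a b : ℕ) : Finset (Arr m) := validArrays (2*m+1) (2*m+1) (oddPattern (2*m+1) m a b)

lemma mem_VA_iff {m a b : ℕ} (e : Arr m) :
    e ∈ VA m a b ↔ ∀ r, rowCard (e r) = oddPattern (2*m+1) m a b r := by
  unfold VA validArrays rowCard
  simp

lemma oddPattern_le {m a b : ℕ} (ha : a ≤ 1) (hb : b ≤ 1) (r : Fin (2*m+1)) :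
    oddPattern (2*m+1) m a b r ≤ 2*m+1 := by
  unfold oddPattern
  have := r.isLt
  split
  · omega
  · split <;> omega

lemma VA_nonempty {m a b : ℕ} (ha : a ≤ 1) (hb : b ≤ 1) : (VA m a b).Nonempty := by
  refine ⟨fun r j => decide ((j:ℕ) < oddPattern (2*m+1) m a b r), ?_⟩
  rw [mem_VA_iff]
  intro r
  exact rowCard_lt (oddPattern_le ha hb r)

lemma inS_nonempty (m : ℕ) : (univ.filter fun e : Arr m => inS m e).Nonempty := by
  classical
  set f : Arr m := fun r j => decide ((j:ℕ) <
    (if (r : ℕ) + 1 = m ∨ (r : ℕ) + 1 = m + 1 then m else (r:ℕ)+1)) with hf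
  refine ⟨f, ?_⟩
  simp only [mem_filter, mem_univ, true_and]
  unfold inS
  intro r
  by_cases hsp : (r : ℕ) + 1 = m ∨ (r : ℕ) + 1 = m + 1
  · rw [if_pos hsp]
    left
    have hfr : f r = fun j : Fin (2*m+1) => decide ((j:ℕ) < m) := by
      funext j; simp only [hf]; rw [if_pos hsp]
    rw [hfr]
    exact rowCard_lt (by omega)
  · rw [if_neg hsp]
    have hfr : f r = fun j : Fin (2*m+1) => decide ((j:ℕ) < (r:ℕ)+1) := by
      funext j; simp only [hf]; rw [if_neg hsp]
    rw [hfr]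
    exact rowCard_lt (by have := r.isLt; omega)


lemma rowCard_compl {m : ℕ} (R : Row m) :
    rowCard (fun i => !(R i)) + rowCard R = 2*m+1 := by
  have h := card_filter_true_add_false R
  have heq : (univ.filter fun x => (!(R x)) = true) = (univ.filter fun x => R x = false) := by
    ext x; simp
  unfold rowCard
  unfold rowCard at h
  rw [heq]
  omega

lemma rho1_val {m : ℕ} (hm : m ≠ 0) : ((rho1 m : Fin (2*m+1)) : ℕ) = m - 1 := rfl
lemma rho2_val {m : ℕ} : ((rho2 m : Fin (2*m+1)) : ℕ) = m := rfl

lemma mem_VA_iff' {m a b : ℕ} (hm : m ≠ 0) (e : Arr m) :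
    e ∈ VA m a b ↔ ((∀ r, r ≠ rho1 m → r ≠ rho2 m → rowCard (e r) = (r:ℕ)+1)
      ∧ rowCard (e (rho1 m)) = m + a ∧ rowCard (e (rho2 m)) = m + b) := by
  rw [mem_VA_iff]
  unfold oddPattern
  constructor
  · intro h
    refine ⟨fun r h1 h2 => ?_, ?_, ?_⟩
    · have hr := h r
      rw [if_neg, if_neg] at hr
      · exact hr
      · intro hc; exact h2 (Fin.ext (by rw [rho2_val]; omega))
      · intro hc; exact h1 (Fin.ext (by rw [rho1_val hm]; omega))
    · have hr := h (rho1 m)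
      rw [if_pos (show ((rho1 m : Fin (2*m+1)) : ℕ) + 1 = m from by rw [rho1_val hm]; omega)] at hr
      exact hr
    · have hr := h (rho2 m)
      rw [if_neg (show ¬ (((rho2 m : Fin (2*m+1)) : ℕ) + 1 = m) from by rw [rho2_val]; omega),
        if_pos (show ((rho2 m : Fin (2*m+1)) : ℕ) + 1 = m + 1 from by rw [rho2_val])] at hr
      exact hr
  · rintro ⟨hb, h1, h2⟩ r
    by_cases hr1 : (r:ℕ)+1 = m
    · rw [if_pos hr1]
      have hre : r = rho1 m := Fin.ext (by rw [rho1_val hm]; omega)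
      rw [hre]; exact h1
    · rw [if_neg hr1]
      by_cases hr2 : (r:ℕ)+1 = m+1
      · rw [if_pos hr2]
        have hre : r = rho2 m := Fin.ext (by rw [rho2_val]; omega)
        rw [hre]; exact h2
      · rw [if_neg hr2]
        refine hb r (fun hc => hr1 ?_) (fun hc => hr2 ?_)
        · rw [hc, rho1_val hm]; omega
        · rw [hc, rho2_val]

lemma oddPattern_rho2 {m a b : ℕ} : oddPattern (2*m+1) m a b (rho2 m) = m + b := by
  show (if m + 1 = m then m + a else if m + 1 = m + 1 then m + b else m + 1) = m + b
  rw [if_neg (by omega), if_pos rfl]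

lemma oddPattern_rho1 {m a b : ℕ} (hm : m ≠ 0) :
    oddPattern (2*m+1) m a b (rho1 m) = m + a := by
  show (if (m-1) + 1 = m then m + a else if (m-1)+1 = m + 1 then m + b else (m-1) + 1) = m + a
  rw [if_pos (by omega)]

lemma oddPattern_b_indep {m a b b' : ℕ} {r : Fin (2*m+1)} (h2 : r ≠ rho2 m) :
    oddPattern (2*m+1) m a b r = oddPattern (2*m+1) m a b' r := by
  unfold oddPattern
  by_cases h1 : (r:ℕ)+1 = m
  · rw [if_pos h1, if_pos h1]
  · rw [if_neg h1, if_neg h1]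
    have hcc : ¬((r:ℕ)+1 = m+1) := fun hc => h2 (Fin.ext (by rw [rho2_val]; omega))
    rw [if_neg hcc, if_neg hcc]

lemma oddPattern_a_indep {m a a' b : ℕ} {r : Fin (2*m+1)} (hm : m ≠ 0) (h1 : r ≠ rho1 m) :
    oddPattern (2*m+1) m a b r = oddPattern (2*m+1) m a' b r := by
  unfold oddPattern
  have hcc : ¬((r:ℕ)+1 = m) := fun hc => h1 (Fin.ext (by rw [rho1_val hm]; omega))
  rw [if_neg hcc, if_neg hcc]

lemma mem_count {m : ℕ} (e : Arr m) :
    ((if e ∈ VA m 0 0 then 1 else 0) + (if e ∈ VA m 0 1 then 1 else 0)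
      + (if e ∈ VA m 1 0 then 1 else 0) + (if e ∈ VA m 1 1 then 1 else 0) : ℕ)
      = (if m = 0 then 2 else 1) * (if inS m e then 1 else 0) := by
  rcases Nat.eq_zero_or_pos m with hm | hm
  · subst hm
    revert e
    decide
  · have hm0 : m ≠ 0 := by omega
    rw [if_neg hm0, one_mul]
    by_cases hin : inS m e
    · rw [if_pos hin]
      rw [inS_iff] at hin
      obtain ⟨hbase, h1, h2⟩ := hin
      have hVA : ∀ a b : ℕ, e ∈ VA m a b
          ↔ (rowCard (e (rho1 m)) = m + a ∧ rowCard (e (rho2 m)) = m + b) := by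
        intro a b
        rw [mem_VA_iff' hm0]
        exact ⟨fun h => ⟨h.2.1, h.2.2⟩, fun h => ⟨hbase, h.1, h.2⟩⟩
      unfold sizeOK at h1 h2
      rcases h1 with h1 | h1 <;> rcases h2 with h2 | h2 <;>
        simp only [hVA, h1, h2] <;> norm_num
    · rw [if_neg hin]
      have hnot : ∀ a b : ℕ, a ≤ 1 → b ≤ 1 → e ∉ VA m a b := by
        intro a b ha hb hmem
        apply hin
        rw [mem_VA_iff' hm0] at hmem
        rw [inS_iff]
        refine ⟨hmem.1, ?_, ?_⟩
        · unfold sizeOK; rw [hmem.2.1]; omega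
        · unfold sizeOK; rw [hmem.2.2]; omega
      rw [if_neg (hnot 0 0 (by omega) (by omega)), if_neg (hnot 0 1 (by omega) (by omega)),
        if_neg (hnot 1 0 (by omega) (by omega)), if_neg (hnot 1 1 (by omega) (by omega))]

lemma sum_eq_of_compl {m : ℕ} {s t : Finset (Arr m)} (ρ : Fin (2*m+1))
    (h : ∀ e : Arr m, e ∈ s ↔ Function.update e ρ (fun i => !(e ρ i)) ∈ t) :
    s.card = t.card := by
  classical
  set C : Arr m → Arr m := fun e => Function.update e ρ (fun i => !(e ρ i)) with hC
  have hCC : ∀ e : Arr m, C (C e) = e := by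
    intro e
    funext r
    by_cases hr : r = ρ
    · subst hr
      rw [hC]
      simp only [Function.update_self]
      funext i
      simp [Function.update_self]
    · rw [hC]
      simp only [Function.update_of_ne hr]
  refine Finset.card_nbij' (i := C) (j := C) ?_ ?_ ?_ ?_
  · intro e he; exact (h e).mp he
  · intro e he
    have hmem : C (C e) ∈ t := by rw [hCC e]; exact he
    exact (h (C e)).mpr hmem
  · intro e _; exact hCC e
  · intro e _; exact hCC e

lemma card_VA_b {m a : ℕ} : (VA m a 0).card = (VA m a 1).card := by
  refine sum_eq_of_compl (rho2 m) (fun e => ?_)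
  rw [mem_VA_iff, mem_VA_iff]
  have hc := rowCard_compl (e (rho2 m))
  constructor
  · intro h r
    by_cases hr : r = rho2 m
    · subst hr
      rw [Function.update_self, oddPattern_rho2]
      have hhr := h (rho2 m)
      rw [oddPattern_rho2] at hhr
      omega
    · rw [Function.update_of_ne hr, oddPattern_b_indep (b := 1) (b' := 0) hr]
      exact h r
  · intro h r
    by_cases hr : r = rho2 m
    · subst hr
      have hhr := h (rho2 m)
      rw [Function.update_self, oddPattern_rho2] at hhr
      rw [oddPattern_rho2]
      omega
    · have hhr := h r
      rw [Function.update_of_ne hr, oddPattern_b_indep (b := 1) (b' := 0) hr] at hhr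
      exact hhr

lemma card_VA_a {m b : ℕ} (hm : m ≠ 0) : (VA m 0 b).card = (VA m 1 b).card := by
  refine sum_eq_of_compl (rho1 m) (fun e => ?_)
  rw [mem_VA_iff, mem_VA_iff]
  have hc := rowCard_compl (e (rho1 m))
  constructor
  · intro h r
    by_cases hr : r = rho1 m
    · subst hr
      rw [Function.update_self, oddPattern_rho1 hm]
      have hhr := h (rho1 m)
      rw [oddPattern_rho1 hm] at hhr
      omega
    · rw [Function.update_of_ne hr, oddPattern_a_indep (a := 1) (a' := 0) hm hr]
      exact h r
  · intro h r
    by_cases hr : r = rho1 m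
    · subst hr
      have hhr := h (rho1 m)
      rw [Function.update_self, oddPattern_rho1 hm] at hhr
      rw [oddPattern_rho1 hm]
      omega
    · have hhr := h r
      rw [Function.update_of_ne hr, oddPattern_a_indep (a := 1) (a' := 0) hm hr] at hhr
      exact hhr

lemma VA_a_zero (a a' b : ℕ) : VA 0 a b = VA 0 a' b := by
  unfold VA
  have : oddPattern (2*0+1) 0 a b = oddPattern (2*0+1) 0 a' b := by
    funext r
    unfold oddPattern
    have h0 : ¬((r:ℕ)+1 = 0) := by omega
    rw [if_neg h0, if_neg h0]
  rw [this]

lemma card_VA_all {m a b : ℕ} (ha : a ≤ 1) (hb : b ≤ 1) :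
    (VA m a b).card = (VA m 0 0).card := by
  have hb' : (VA m a b).card = (VA m a 0).card := by
    interval_cases b
    · rfl
    · exact card_VA_b.symm
  rw [hb']
  rcases Nat.eq_zero_or_pos m with hm | hm
  · subst hm; rw [VA_a_zero a 0 0]
  · interval_cases a
    · rfl
    · exact (card_VA_a (by omega)).symm

lemma partition_count {m : ℕ} (p : Arr m → Prop) [DecidablePred p] :
    ((VA m 0 0).filter p).card + ((VA m 0 1).filter p).card
      + ((VA m 1 0).filter p).card + ((VA m 1 1).filter p).card
      = (if m = 0 then 2 else 1) * (univ.filter fun e => inS m e ∧ p e).card := by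
  classical
  have hcards : ∀ (s : Finset (Arr m)),
      (s.filter p).card = ∑ e : Arr m, (if e ∈ s ∧ p e then 1 else 0) := by
    intro s
    have : s.filter p = univ.filter (fun e => e ∈ s ∧ p e) := by
      ext e; simp [mem_filter]
    rw [this, Finset.card_filter]
  rw [hcards, hcards, hcards, hcards, Finset.card_filter, Finset.mul_sum,
    ← Finset.sum_add_distrib, ← Finset.sum_add_distrib, ← Finset.sum_add_distrib]
  refine Finset.sum_congr rfl (fun e _ => ?_)
  by_cases hp : p e
  · simp only [hp, and_true]
    exact mem_count e
  · simp [hp]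



/-! ### the coupling measure -/

def Sfin (m : ℕ) : Finset (Arr m) := univ.filter (fun e => inS m e)

def N1 (m : ℕ) : ℕ := (univ.filter fun e : Arr m => inS m e ∧ bulbOn e 0 = true).card

def Dn (m : ℕ) : ℕ := 2*(m+1)*(Sfin m).card

noncomputable def Pm (m : ℕ) : Measure (Arr m × Arr m) :=
  ((Dn m : ℝ≥0∞))⁻¹ • ∑ ω : Arr m × Arr m, ((cW ω.1 ω.2 : ℝ≥0∞)) • Measure.dirac ω

lemma sum_cW_eq_Dn (m : ℕ) : ∑ ω : Arr m × Arr m, cW ω.1 ω.2 = Dn m := by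
  classical
  rw [Fintype.sum_prod_type, Finset.sum_congr rfl (fun e (_ : e ∈ univ) => cW_rowsum e),
    ← Finset.sum_mul, ← Finset.card_filter]
  unfold Dn Sfin
  ring

lemma sum_cW_eq_N1 (m : ℕ) : ∑ ω : Arr m × Arr m, cW ω.1 ω.2 = 4*(m+1)*(N1 m) := by
  classical
  rw [Fintype.sum_prod_type, Finset.sum_comm]
  rw [Finset.sum_congr rfl (fun e' (_ : e' ∈ univ) => cW_colsum e')]
  rw [← Finset.sum_mul, ← Finset.card_filter]
  unfold N1
  ring

lemma Scard_eq (m : ℕ) : (Sfin m).card = 2 * N1 m := by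
  have h1 := sum_cW_eq_Dn m
  have h2 := sum_cW_eq_N1 m
  unfold Dn at h1
  have h3 := h1.symm.trans h2
  have hc : (m+1) * (2 * (Sfin m).card) = (m+1) * (4 * N1 m) := by
    calc (m+1) * (2 * (Sfin m).card) = 2*(m+1)*(Sfin m).card := by ring
      _ = 4*(m+1)*(N1 m) := h3
      _ = (m+1) * (4 * N1 m) := by ring
  have := Nat.eq_of_mul_eq_mul_left (Nat.succ_pos m) hc
  omega

lemma Sfin_card_ne (m : ℕ) : (Sfin m).card ≠ 0 := by
  have h : (0:ℕ) < (univ.filter fun e : Arr m => inS m e).card :=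
    Finset.card_pos.mpr (inS_nonempty m)
  unfold Sfin
  omega

lemma Dn_ne_zero (m : ℕ) : Dn m ≠ 0 := by
  unfold Dn
  have := Sfin_card_ne m
  positivity

lemma N1_ne_zero (m : ℕ) : N1 m ≠ 0 := by
  have := Scard_eq m
  have := Sfin_card_ne m
  omega

lemma Dn_eq (m : ℕ) : Dn m = 4*(m+1)*(N1 m) := by
  unfold Dn
  rw [Scard_eq]
  ring

lemma Pm_apply (m : ℕ) (A : Set (Arr m × Arr m)) :
    Pm m A = (Dn m : ℝ≥0∞)⁻¹
      * ∑ ω : Arr m × Arr m, A.indicator (fun ω => (cW ω.1 ω.2 : ℝ≥0∞)) ω := by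
  unfold Pm
  rw [Measure.smul_apply, Measure.finset_sum_apply, smul_eq_mul]
  congr 1
  refine Finset.sum_congr rfl (fun ω _ => ?_)
  rw [Measure.smul_apply, Measure.dirac_apply' _ MeasurableSet.of_discrete, smul_eq_mul]
  by_cases h : ω ∈ A
  · rw [Set.indicator_of_mem h, Set.indicator_of_mem h, Pi.one_apply, mul_one]
  · rw [Set.indicator_of_notMem h, Set.indicator_of_notMem h, mul_zero]

lemma Pm_null (m : ℕ) (A : Set (Arr m × Arr m)) (h : ∀ ω ∈ A, cW ω.1 ω.2 = 0) :
    Pm m A = 0 := by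
  rw [Pm_apply]
  have hz : ∀ ω : Arr m × Arr m, A.indicator (fun ω => (cW ω.1 ω.2 : ℝ≥0∞)) ω = 0 := by
    intro ω
    by_cases hω : ω ∈ A
    · rw [Set.indicator_of_mem hω]
      exact_mod_cast h ω hω
    · exact Set.indicator_of_notMem hω _
  simp only [hz]
  rw [Finset.sum_const, smul_zero, mul_zero]

lemma Pm_prob (m : ℕ) : IsProbabilityMeasure (Pm m) := by
  constructor
  rw [Pm_apply]
  have hps : ∀ ω : Arr m × Arr m,
      (Set.univ : Set (Arr m × Arr m)).indicator (fun ω => (cW ω.1 ω.2 : ℝ≥0∞)) ω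
        = (cW ω.1 ω.2 : ℝ≥0∞) :=
    fun ω => Set.indicator_of_mem (Set.mem_univ ω) _
  simp only [hps]
  rw [← Nat.cast_sum, sum_cW_eq_Dn]
  exact ENNReal.inv_mul_cancel (by exact_mod_cast Dn_ne_zero m) (ENNReal.natCast_ne_top _)

lemma Pm_int (m : ℕ) (f : Arr m × Arr m → ℝ) :
    ∫ ω, f ω ∂(Pm m) = (Dn m : ℝ)⁻¹ * ∑ ω : Arr m × Arr m, (cW ω.1 ω.2 : ℝ) * f ω := by
  unfold Pm
  have hfin : ∀ ω : Arr m × Arr m, IsFiniteMeasure ((cW ω.1 ω.2 : ℝ≥0∞) • Measure.dirac ω) := by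
    intro ω
    constructor
    rw [Measure.smul_apply, smul_eq_mul]
    exact ENNReal.mul_lt_top (ENNReal.natCast_lt_top _) (measure_lt_top _ _)
  rw [integral_smul_measure, integral_finset_sum_measure (fun ω _ => by
    haveI := hfin ω
    exact Integrable.of_finite)]
  rw [ENNReal.toReal_inv, ENNReal.toReal_natCast, smul_eq_mul]
  congr 1
  refine Finset.sum_congr rfl (fun ω _ => ?_)
  rw [integral_smul_measure, integral_dirac, smul_eq_mul, ENNReal.toReal_natCast]

lemma sum_cW_fst (m : ℕ) (F : Arr m → ℝ) :
    ∑ ω : Arr m × Arr m, (cW ω.1 ω.2 : ℝ) * F ω.1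
      = (2*(m+1) : ℝ) * ∑ e ∈ Sfin m, F e := by
  classical
  rw [Fintype.sum_prod_type]
  have h1 : ∀ e : Arr m, ∑ e' : Arr m, (cW e e' : ℝ) * F e
      = (((if inS m e then 1 else 0) * (2*(m+1)) : ℕ) : ℝ) * F e := by
    intro e
    rw [← Finset.sum_mul, ← Nat.cast_sum, cW_rowsum]
  rw [Finset.sum_congr rfl (fun e _ => h1 e)]
  unfold Sfin
  rw [Finset.sum_filter, Finset.mul_sum]
  refine Finset.sum_congr rfl (fun e _ => ?_)
  by_cases h : inS m e
  · rw [if_pos h, if_pos h]; push_cast; ring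
  · rw [if_neg h, if_neg h]; push_cast; ring

lemma sum_cW_snd (m : ℕ) (F : Arr m → ℝ) :
    ∑ ω : Arr m × Arr m, (cW ω.1 ω.2 : ℝ) * F ω.2
      = (4*(m+1) : ℝ)
        * ∑ e ∈ univ.filter (fun e : Arr m => inS m e ∧ bulbOn e 0 = true), F e := by
  classical
  rw [Fintype.sum_prod_type, Finset.sum_comm]
  have h1 : ∀ e' : Arr m, ∑ e : Arr m, (cW e e' : ℝ) * F e'
      = (((if inS m e' ∧ bulbOn e' 0 = true then 1 else 0) * (4*(m+1)) : ℕ) : ℝ) * F e' := by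
    intro e'
    rw [← Finset.sum_mul, ← Nat.cast_sum, cW_colsum]
  rw [Finset.sum_congr rfl (fun e' _ => h1 e')]
  rw [Finset.sum_filter, Finset.mul_sum]
  refine Finset.sum_congr rfl (fun e _ => ?_)
  by_cases h : inS m e ∧ bulbOn e 0 = true
  · rw [if_pos h, if_pos h]; push_cast; ring
  · rw [if_neg h, if_neg h]; push_cast; ring

lemma Pm_dist (m v : ℕ) :
    Pm m {ω : Arr m × Arr m | numOn ω.1 = v}
      = (1 / 4 : ℝ≥0∞) * ∑ a ∈ Finset.range 2, ∑ b ∈ Finset.range 2,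
          (((VA m a b).filter (fun e => numOn e = v)).card : ℝ≥0∞)
            / ((VA m a b).card : ℝ≥0∞) := by
  classical
  rw [Pm_apply]
  have hps : ∀ ω : Arr m × Arr m,
      ({ω : Arr m × Arr m | numOn ω.1 = v}).indicator (fun ω => (cW ω.1 ω.2 : ℝ≥0∞)) ω
      = ((cW ω.1 ω.2 * (if numOn ω.1 = v then 1 else 0) : ℕ) : ℝ≥0∞) := by
    intro ω
    by_cases h : numOn ω.1 = v
    · rw [Set.indicator_of_mem (show ω ∈ {ω : Arr m × Arr m | numOn ω.1 = v} from h)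
        (fun ω => (cW ω.1 ω.2 : ℝ≥0∞)), if_pos h, mul_one]
    · rw [Set.indicator_of_notMem (show ω ∉ {ω : Arr m × Arr m | numOn ω.1 = v} from h)
        (fun ω => (cW ω.1 ω.2 : ℝ≥0∞)), if_neg h, mul_zero, Nat.cast_zero]
  simp only [hps]
  rw [← Nat.cast_sum]
  have hnat : ∑ ω : Arr m × Arr m, cW ω.1 ω.2 * (if numOn ω.1 = v then 1 else 0)
      = 2*(m+1) * (univ.filter fun e : Arr m => inS m e ∧ numOn e = v).card := by
    rw [Fintype.sum_prod_type]
    have h1 : ∀ e : Arr m, ∑ e' : Arr m, cW e e' * (if numOn e = v then 1 else 0)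
        = ((if inS m e then 1 else 0) * (2*(m+1))) * (if numOn e = v then 1 else 0) := by
      intro e; rw [← Finset.sum_mul, cW_rowsum]
    rw [Finset.sum_congr rfl (fun e _ => h1 e)]
    have h2 : ∀ e : Arr m, ((if inS m e then 1 else 0) * (2*(m+1))) * (if numOn e = v then 1 else 0)
        = 2*(m+1) * (if inS m e ∧ numOn e = v then 1 else 0) := by
      intro e
      by_cases ha : inS m e <;> by_cases hb : numOn e = v <;> simp [ha, hb]
    rw [Finset.sum_congr rfl (fun e _ => h2 e), ← Finset.mul_sum, ← Finset.card_filter]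
  rw [hnat]
  -- notation
  have hZab : ∀ a b : ℕ, a ≤ 1 → b ≤ 1 → (VA m a b).card = (VA m 0 0).card :=
    fun a b ha hb => card_VA_all ha hb
  have hnum : ((VA m 0 0).filter (fun e => numOn e = v)).card
      + ((VA m 0 1).filter (fun e => numOn e = v)).card
      + ((VA m 1 0).filter (fun e => numOn e = v)).card
      + ((VA m 1 1).filter (fun e => numOn e = v)).card
      = (if m = 0 then 2 else 1) * (univ.filter fun e : Arr m => inS m e ∧ numOn e = v).card :=
    partition_count (m := m) (fun e => numOn e = v)
  have hcard4 : 4 * (VA m 0 0).card = (if m = 0 then 2 else 1) * (Sfin m).card := by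
    have h := partition_count (m := m) (fun _ => True)
    simp only [Finset.filter_true, and_true] at h
    rw [hZab 0 1 (by omega) (by omega), hZab 1 0 (by omega) (by omega),
      hZab 1 1 (by omega) (by omega)] at h
    unfold Sfin
    omega
  have hr2 : ∀ f : ℕ → ℝ≥0∞, ∑ a ∈ Finset.range 2, f a = f 0 + f 1 := by
    intro f; rw [Finset.sum_range_succ, Finset.sum_range_succ, Finset.sum_range_zero, zero_add]
  rw [hr2, hr2, hr2]
  rw [hZab 0 1 (by omega) (by omega), hZab 1 0 (by omega) (by omega),
    hZab 1 1 (by omega) (by omega)]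
  rw [ENNReal.div_add_div_same, ENNReal.div_add_div_same, ENNReal.div_add_div_same]
  rw [← Nat.cast_add, ← Nat.cast_add, ← Nat.cast_add,
    show ((VA m 0 0).filter (fun e => numOn e = v)).card
        + ((VA m 0 1).filter (fun e => numOn e = v)).card
        + (((VA m 1 0).filter (fun e => numOn e = v)).card
          + ((VA m 1 1).filter (fun e => numOn e = v)).card)
      = (if m = 0 then 2 else 1) * (univ.filter fun e : Arr m => inS m e ∧ numOn e = v).card
      from by omega]
  -- LHS : (Dn)⁻¹ * (2(m+1) Nv) ; RHS : 4⁻¹ * (K Nv / Z)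
  set K : ℕ := if m = 0 then 2 else 1 with hK
  set Nv : ℕ := (univ.filter fun e : Arr m => inS m e ∧ numOn e = v).card with hNv
  set Z : ℕ := (VA m 0 0).card with hZ
  have hK0 : (K : ℝ≥0∞) ≠ 0 := by
    rw [hK]; split <;> simp
  have hKtop : (K : ℝ≥0∞) ≠ ⊤ := ENNReal.natCast_ne_top _
  have hLHS : (Dn m : ℝ≥0∞)⁻¹ * ((2*(m+1) * Nv : ℕ) : ℝ≥0∞)
      = (Nv : ℝ≥0∞) / ((Sfin m).card : ℝ≥0∞) := by
    rw [mul_comm, ← div_eq_mul_inv]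
    unfold Dn
    push_cast
    rw [show ((2:ℝ≥0∞) * (↑m+1) * ↑Nv) = (2 * (↑m+1)) * ↑Nv from by ring,
      show ((2:ℝ≥0∞) * (↑m+1) * ↑(Sfin m).card) = (2 * (↑m+1)) * ↑(Sfin m).card from by ring]
    refine ENNReal.mul_div_mul_left _ _ ?_ ?_
    · intro hc
      rw [show (2:ℝ≥0∞) * (↑m+1) = ((2*(m+1) : ℕ) : ℝ≥0∞) from by push_cast; ring] at hc
      rw [Nat.cast_eq_zero] at hc
      omega
    · rw [show (2:ℝ≥0∞) * (↑m+1) = ((2*(m+1) : ℕ) : ℝ≥0∞) from by push_cast; ring]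
      exact ENNReal.natCast_ne_top _
  rw [hLHS]
  -- RHS
  have hRHS : (1/4 : ℝ≥0∞) * ((K * Nv : ℕ) : ℝ≥0∞) / (Z : ℝ≥0∞)
      = (Nv : ℝ≥0∞) / ((Sfin m).card : ℝ≥0∞) := by
    rw [one_div, mul_comm, div_eq_mul_inv, mul_assoc, ← ENNReal.mul_inv (by norm_num) (by norm_num),
      ← div_eq_mul_inv]
    rw [show ((4:ℝ≥0∞) * (Z : ℝ≥0∞)) = ((K * (Sfin m).card : ℕ) : ℝ≥0∞) from by
      rw [← hcard4]; push_cast; ring]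
    push_cast
    exact ENNReal.mul_div_mul_left _ _ hK0 hKtop
  rw [← hRHS]
  rw [div_eq_mul_inv, div_eq_mul_inv, mul_assoc]
  rw [div_eq_mul_inv]

lemma Pm_sizebias (m : ℕ) (g : ℝ → ℝ) :
    ∫ ω, (numOn ω.1 : ℝ) * g (numOn ω.1) ∂(Pm m)
      = (∫ ω, (numOn ω.1 : ℝ) ∂(Pm m)) * ∫ ω, g (numOn ω.2) ∂(Pm m) := by
  classical
  rw [Pm_int, Pm_int, Pm_int]
  rw [sum_cW_fst m (fun e => (numOn e : ℝ) * g (numOn e)),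
    sum_cW_fst m (fun e => (numOn e : ℝ)),
    sum_cW_snd m (fun e => g (numOn e))]
  have hBB : ∑ e ∈ univ.filter (fun e : Arr m => inS m e),
        (if bulbOn e 0 = true then g (numOn e) else 0)
      = ∑ e ∈ univ.filter (fun e : Arr m => inS m e ∧ bulbOn e 0 = true), g (numOn e) := by
    rw [← Finset.filter_filter, ← Finset.sum_filter]
  have s1 := sum_V_F (m := m) (fun k => g k)
  have s2 := sum_V_F (m := m) (fun _ => (1:ℝ))
  have hs2' : ∑ e ∈ univ.filter (fun e : Arr m => inS m e), (numOn e : ℝ)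
      = (2*m+1 : ℝ) * (N1 m : ℝ) := by
    have h0 : ∑ e ∈ univ.filter (fun e : Arr m => inS m e), (numOn e : ℝ)
        = ∑ e ∈ univ.filter (fun e : Arr m => inS m e), (numOn e : ℝ) * (fun _ : ℕ => (1:ℝ)) (numOn e) := by
      refine Finset.sum_congr rfl (fun e _ => ?_)
      simp
    rw [h0, s2]
    congr 1
    rw [Finset.sum_boole, N1, Finset.filter_filter]
  have hs1' : ∑ e ∈ univ.filter (fun e : Arr m => inS m e), (numOn e : ℝ) * g (numOn e)
      = (2*m+1 : ℝ) * ∑ e ∈ univ.filter (fun e : Arr m => inS m e ∧ bulbOn e 0 = true),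
          g (numOn e) := by
    rw [s1, hBB]
  unfold Sfin
  rw [hs1', hs2']
  have hDnR : ((Dn m : ℕ) : ℝ) = 4*((m:ℝ)+1)*((N1 m : ℕ) : ℝ) := by
    rw [Dn_eq]
    push_cast
    ring
  rw [hDnR]
  have hN1R : ((N1 m : ℕ) : ℝ) ≠ 0 := by
    rw [Nat.cast_ne_zero]
    exact N1_ne_zero m
  have hmR : (4*((m:ℝ)+1)) ≠ 0 := by positivity
  field_simp

lemma Pm_ae (m : ℕ) :
    ∀ᵐ ω ∂(Pm m), numOn ω.2 = numOn ω.1 ∨ numOn ω.2 = numOn ω.1 + 1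
      ∨ numOn ω.2 = numOn ω.1 + 2 := by
  rw [ae_iff]
  refine Pm_null m _ (fun ω hω => ?_)
  by_contra hc
  exact hω (cW_support hc)

end LB

theorem lightbulb_size_bias_coupling_odd {n m : ℕ} (hm : n = 2 * m + 1) :
    ∃ (Ω : Type) (_ : MeasurableSpace Ω) (P : Measure Ω) (_ : IsProbabilityMeasure P)
      (V' Vs : Ω → ℕ),
      Measurable V' ∧ Measurable Vs ∧
      (∀ v : ℕ, P {ω | V' ω = v}
        = (1 / 4 : ENNReal) * ∑ a ∈ Finset.range 2, ∑ b ∈ Finset.range 2,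
            (((validArrays n n (oddPattern n m a b)).filter
                (fun e => numOn e = v)).card : ENNReal)
              / ((validArrays n n (oddPattern n m a b)).card : ENNReal)) ∧
      HasSizeBias P (fun ω => (V' ω : ℝ)) (fun ω => (Vs ω : ℝ)) ∧
      (∀ᵐ ω ∂P, Vs ω = V' ω ∨ Vs ω = V' ω + 1 ∨ Vs ω = V' ω + 2) ∧
      (∀ᵐ ω ∂P, V' ω ≤ Vs ω ∧ Vs ω ≤ V' ω + 2) := by
  subst hm
  classical
  refine ⟨(LB.Arr m) × (LB.Arr m), inferInstance, LB.Pm m, LB.Pm_prob m,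
    (fun ω => numOn ω.1), (fun ω => numOn ω.2),
    Measurable.of_discrete, Measurable.of_discrete, ?_, ?_, ?_, ?_⟩
  · intro v
    exact LB.Pm_dist m v
  · intro g hg hbd
    exact LB.Pm_sizebias m g
  · exact LB.Pm_ae m
  · refine (LB.Pm_ae m).mono (fun ω hω => ?_)
    show numOn ω.1 ≤ numOn ω.2 ∧ numOn ω.2 ≤ numOn ω.1 + 2
    rcases hω with h | h | h <;> constructor <;> omega
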